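/- arXiv:1906.07216 — 2 statements merged into one kernel-verified Lean document; each statement's English description precedes it below -/
import Mathlib

section
/- Let p be a prime, G a finite group, S a Sylow p-subgroup of G, and Q ≤ S a large p-subgroup of G, i.e. C_G(Q) ≤ Q and N_G(U) ≤ N_G(Q) for every nontrivial subgroup U of C_G(Q). Let L be a subgroup of G with S ≤ L and L not contained in N_G(Q), and let Y be a normal elementary abelian p-subgroup of L. Then C_Y(L°) = 1, where L° = ⟨Q^L⟩ is the normal closure of Q in L. -/
/-- A `p`-subgroup `Q` of a group is *large* if `C_G(Q) ≤ Q` and `N_G(U) ≤ N_G(Q)` for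
every nontrivial subgroup `U` of `C_G(Q)`. -/
def IsLargeSubgroup (p : ℕ) {G : Type*} [Group G] (Q : Subgroup G) : Prop :=
  IsPGroup p Q ∧ Subgroup.centralizer (Q : Set G) ≤ Q ∧
    ∀ U : Subgroup G, U ≠ ⊥ → U ≤ Subgroup.centralizer (Q : Set G) →
      Subgroup.normalizer (U : Set G) ≤ Subgroup.normalizer (Q : Set G)

/-- `conjClosure A H = ⟨A^H⟩`, the subgroup generated by all `H`-conjugates of `A`. -/
def conjClosure {G : Type*} [Group G] (A H : Subgroup G) : Subgroup G :=
  Subgroup.closure {x : G | ∃ h ∈ H, ∃ a ∈ A, x = h * a * h⁻¹}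

/-- Let `G` be a finite group, `S` a Sylow `p`-subgroup, `Q ≤ S` a large
`p`-subgroup of `G`, and `L ≥ S` a subgroup not contained in `N_G(Q)`.  If `Y` is a normal
elementary abelian `p`-subgroup of `L`, then `C_Y(L°) = 1`, where `L° = ⟨Q^L⟩`. -/
theorem stmt9 {p : ℕ} (hp : p.Prime) {G : Type*} [Group G] [Finite G]
    (S : Sylow p G) (Q : Subgroup G) (hQS : Q ≤ S) (hQ : IsLargeSubgroup p Q)
    (L : Subgroup G) (hSL : (S : Subgroup G) ≤ L) (hLnN : ¬ L ≤ Subgroup.normalizer (Q : Set G))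
    (Y : Subgroup G) (hYL : Y ≤ L)
    (hYnormL : ∀ l ∈ L, ∀ y ∈ Y, l * y * l⁻¹ ∈ Y)
    (hYp : IsPGroup p Y)
    (hYexp : ∀ y ∈ Y, y ^ p = 1) (hYab : ∀ y ∈ Y, ∀ z ∈ Y, y * z = z * y) :
    Y ⊓ Subgroup.centralizer ((conjClosure Q L : Subgroup G) : Set G) = ⊥ := by
  by_contra hne
  set Lc : Subgroup G := conjClosure Q L with hLcdef
  set Z : Subgroup G := Y ⊓ Subgroup.centralizer (Lc : Set G) with hZdef
  -- Q ≤ Lc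
  have hQLc : Q ≤ Lc := fun a ha =>
    Subgroup.subset_closure ⟨1, one_mem L, a, ha, by group⟩
  -- L normalizes Lc
  have hnorm : ∀ l ∈ L, ∀ x ∈ Lc, l * x * l⁻¹ ∈ Lc := by
    intro l hl x hx
    refine Subgroup.closure_induction ?_ ?_ ?_ ?_ hx
    · rintro y ⟨h, hh, a, ha, rfl⟩
      refine Subgroup.subset_closure ⟨l * h, mul_mem hl hh, a, ha, by group⟩
    · simpa using Subgroup.one_mem Lc
    · intro x y _ _ hx hy
      have := mul_mem hx hy
      simpa [mul_assoc] using this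
    · intro x _ hx
      have := inv_mem hx
      simpa [mul_assoc] using this
  -- L maps Z into Z under conjugation
  have hZconj : ∀ l ∈ L, ∀ z ∈ Z, l * z * l⁻¹ ∈ Z := by
    intro l hl z hz
    rw [Subgroup.mem_inf] at hz ⊢
    obtain ⟨hzY, hzC⟩ := hz
    refine ⟨hYnormL l hl z hzY, ?_⟩
    rw [Subgroup.mem_centralizer_iff]
    intro x hx
    have hx' : l⁻¹ * x * l ∈ (Lc : Set G) := by
      simpa using hnorm l⁻¹ (inv_mem hl) x hx
    have hcomm := (Subgroup.mem_centralizer_iff.mp hzC) _ hx'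
    have : l * ((l⁻¹ * x * l) * z) * l⁻¹ = l * (z * (l⁻¹ * x * l)) * l⁻¹ := by
      rw [hcomm]
    calc x * (l * z * l⁻¹) = l * ((l⁻¹ * x * l) * z) * l⁻¹ := by group
      _ = l * (z * (l⁻¹ * x * l)) * l⁻¹ := this
      _ = (l * z * l⁻¹) * x := by group
  -- L ≤ normalizer Z
  have hLnormZ : L ≤ Subgroup.normalizer (Z : Set G) := by
    intro l hl
    rw [Subgroup.mem_normalizer_iff]
    intro n
    constructor
    · intro hn; exact hZconj l hl n hn
    · intro hn
      have := hZconj l⁻¹ (inv_mem hl) _ hn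
      simpa [mul_assoc] using this
  -- Z ≤ centralizer Q
  have hZC : Z ≤ Subgroup.centralizer (Q : Set G) := by
    refine le_trans inf_le_right (Subgroup.centralizer_le ?_)
    exact fun x hx => hQLc hx
  exact hLnN (le_trans hLnormZ (hQ.2.2 Z hne hZC))
end

section
/- Let p be a prime, G a finite group, S a Sylow p-subgroup of G, and Q ≤ S a large p-subgroup of G (C_G(Q) ≤ Q and N_G(U) ≤ N_G(Q) for every nontrivial subgroup U of C_G(Q)) such that Q contains every normal p-subgroup of N_G(Q). Let L be a subgroup of G with S ≤ L, and let V be a normal p-subgroup of L with V ≤ S and V not contained in Q. Set D = ⟨V^{N_G(Q)}⟩(L ∩ N_G(Q)) and W = ⟨(V ∩ Q)^D⟩. Then: (i) ⟨V^D⟩ is not a p-group; (ii) [Q, ⟨V^D⟩] ≤ W; and (iii) W does not centralize V, i.e. W is not contained in C_G(V). -/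
section helpers
variable {G : Type*} [Group G]

theorem my_mem_conjClosure_of {A H : Subgroup G} {g a : G} (hg : g ∈ H) (ha : a ∈ A) :
    g * a * g⁻¹ ∈ conjClosure A H :=
  Subgroup.subset_closure ⟨g, hg, a, ha, rfl⟩

theorem my_le_conjClosure (A H : Subgroup G) : A ≤ conjClosure A H := fun a ha => by
  simpa using my_mem_conjClosure_of (one_mem H) ha

theorem my_conjClosure_le {A H K : Subgroup G}
    (h : ∀ g ∈ H, ∀ a ∈ A, g * a * g⁻¹ ∈ K) : conjClosure A H ≤ K := by
  rw [conjClosure, Subgroup.closure_le]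
  rintro x ⟨g, hg, a, ha, rfl⟩
  exact h g hg a ha

theorem my_conj_mem_conjClosure {A H : Subgroup G} {g : G} (hg : g ∈ H) {x : G}
    (hx : x ∈ conjClosure A H) : g * x * g⁻¹ ∈ conjClosure A H := by
  induction hx using Subgroup.closure_induction with
  | mem y hy =>
    obtain ⟨h, hh, a, ha, rfl⟩ := hy
    have e : g * (h * a * h⁻¹) * g⁻¹ = (g * h) * a * (g * h)⁻¹ := by group
    rw [e]; exact my_mem_conjClosure_of (mul_mem hg hh) ha
  | one => simpa using one_mem _
  | mul x y hxm hym ihx ihy =>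
    have e : g * (x * y) * g⁻¹ = (g * x * g⁻¹) * (g * y * g⁻¹) := by group
    rw [e]; exact mul_mem ihx ihy
  | inv x hxm ihx =>
    have e : g * x⁻¹ * g⁻¹ = (g * x * g⁻¹)⁻¹ := by group
    rw [e]; exact inv_mem ihx

theorem my_conj_pow (g x : G) (n : ℕ) : (g * x * g⁻¹) ^ n = g * x ^ n * g⁻¹ := by
  induction n with
  | zero => simp
  | succ n ih => rw [pow_succ, pow_succ, ih]; group

theorem my_normal_le_sylow {p : ℕ} [Fact p.Prime] [Finite G] {P : Subgroup G}
    (h : IsPGroup p P) (hn : P.Normal) (T : Sylow p G) : P ≤ T := by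
  obtain ⟨R, hR⟩ := h.exists_le_sylow
  obtain ⟨g, hg⟩ := MulAction.exists_smul_eq G R T
  intro x hx
  have h1 : g⁻¹ * x * g ∈ P := by simpa using hn.conj_mem x hx g⁻¹
  have h2 : g⁻¹ * x * g ∈ R := hR h1
  rw [← hg]
  show x ∈ ((g • R : Sylow p G) : Subgroup G)
  rw [Sylow.smul_def, Sylow.pointwise_smul_def]
  rw [Subgroup.mem_pointwise_smul_iff_inv_smul_mem]
  simpa using hR h1

end helpers

/-- Let `G` be a finite group, `S` a Sylow `p`-subgroup, `Q ≤ S` a large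
`p`-subgroup of `G` containing every normal `p`-subgroup of `N_G(Q)`.  Let `L ≥ S` be a
subgroup and `V ≤ S` a normal `p`-subgroup of `L` with `V ≰ Q`.  Set
`D = ⟨V^{N_G(Q)}⟩(L ∩ N_G(Q))` and `W = ⟨(V ∩ Q)^D⟩`.  Then (i) `⟨V^D⟩` is not a
`p`-group; (ii) `[Q, ⟨V^D⟩] ≤ W`; and (iii) `W ≰ C_G(V)`. -/
theorem stmt12 {p : ℕ} (hp : p.Prime) {G : Type*} [Group G] [Finite G]
    (S : Sylow p G) (Q : Subgroup G) (hQS : Q ≤ S) (hQ : IsLargeSubgroup p Q)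
    (hQop : ∀ N : Subgroup G, IsPGroup p N → N ≤ Subgroup.normalizer (Q : Set G) →
      (∀ g ∈ Subgroup.normalizer (Q : Set G), ∀ n ∈ N, g * n * g⁻¹ ∈ N) → N ≤ Q)
    (L : Subgroup G) (hSL : (S : Subgroup G) ≤ L)
    (V : Subgroup G) (hVS : V ≤ S) (hVp : IsPGroup p V)
    (hVnormL : ∀ l ∈ L, ∀ v ∈ V, l * v * l⁻¹ ∈ V)
    (hVL : V ≤ L)
    (hVQ : ¬ V ≤ Q)
    (D : Subgroup G) (hD : D = conjClosure V (Subgroup.normalizer (Q : Set G)) ⊔ (L ⊓ Subgroup.normalizer (Q : Set G)))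
    (W : Subgroup G) (hW : W = conjClosure (V ⊓ Q) D) :
    ¬ IsPGroup p (conjClosure V D) ∧
    ⁅Q, conjClosure V D⁆ ≤ W ∧
    ¬ W ≤ Subgroup.centralizer (V : Set G) := by
  haveI : Fact p.Prime := ⟨hp⟩
  -- ### Step 0 : S normalizes Q
  have hVne : V ≠ ⊥ := fun h => hVQ (h ▸ bot_le)
  have hSne : (S : Subgroup G) ≠ ⊥ := by
    intro h
    exact hVne (le_bot_iff.mp (h ▸ hVS))
  haveI : Nontrivial (↥(S : Subgroup G)) :=
    (Subgroup.nontrivial_iff_ne_bot (S : Subgroup G)).mpr hSne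
  haveI := S.2.center_nontrivial
  obtain ⟨z, hz1⟩ := exists_ne (1 : Subgroup.center ↥(S : Subgroup G))
  set zG : G := ((z : ↥(S : Subgroup G)) : G) with hzGdef
  have hzcomm : ∀ s ∈ (S : Subgroup G), s * zG = zG * s := by
    intro s hs
    exact congrArg Subtype.val (Subgroup.mem_center_iff.mp z.2 ⟨s, hs⟩)
  have hzG1 : zG ≠ 1 := by
    intro h
    exact hz1 (Subtype.ext (Subtype.ext h))
  set U : Subgroup G := Subgroup.closure {zG} with hUdef
  have hzU : zG ∈ U := Subgroup.subset_closure rfl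
  have hUne : U ≠ ⊥ := by
    intro h
    rw [h] at hzU
    exact hzG1 (Subgroup.mem_bot.mp hzU)
  have hUQ : U ≤ Subgroup.centralizer (Q : Set G) := by
    rw [hUdef, Subgroup.closure_le]
    intro x hx
    rw [Set.mem_singleton_iff] at hx
    rw [hx]
    exact Subgroup.mem_centralizer_iff.mpr fun q hq => hzcomm q (hQS hq)
  have hSN : (S : Subgroup G) ≤ Subgroup.normalizer (Q : Set G) := by
    refine le_trans ?_ (hQ.2.2 U hUne hUQ)
    intro s hs
    have hUcent : U ≤ Subgroup.centralizer {s} := by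
      rw [hUdef, Subgroup.closure_le]
      intro x hx
      rw [Set.mem_singleton_iff] at hx
      rw [hx]
      refine Subgroup.mem_centralizer_iff.mpr fun h hh => ?_
      rw [Set.mem_singleton_iff] at hh
      rw [hh]
      exact hzcomm s hs
    rw [Subgroup.mem_normalizer_iff]
    intro g
    constructor
    · intro hg
      have hc : s * g = g * s := Subgroup.mem_centralizer_iff.mp (hUcent hg) s rfl
      have e : s * g * s⁻¹ = g := by rw [hc]; group
      rw [e]; exact hg
    · intro hg
      have hc : s * (s * g * s⁻¹) = (s * g * s⁻¹) * s :=
        Subgroup.mem_centralizer_iff.mp (hUcent hg) s rfl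
      have e : g = s * g * s⁻¹ := by
        calc g = s⁻¹ * (s * g * s⁻¹) * s := by group
        _ = s⁻¹ * ((s * g * s⁻¹) * s) := by group
        _ = s⁻¹ * (s * (s * g * s⁻¹)) := by rw [← hc]
        _ = s * g * s⁻¹ := by group
      rw [← e] at hg
      exact hg
  -- ### basic containments
  have hVN : V ≤ Subgroup.normalizer (Q : Set G) := hVS.trans hSN
  have hDN : D ≤ Subgroup.normalizer (Q : Set G) := by
    rw [hD]
    exact sup_le
      (my_conjClosure_le fun g hg a ha => mul_mem (mul_mem hg (hVN ha)) (inv_mem hg))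
      inf_le_right
  have hSD : (S : Subgroup G) ≤ D := by
    rw [hD]
    exact le_trans (le_inf hSL hSN) le_sup_right
  have hVD : V ≤ D := hVS.trans hSD
  have hMD : conjClosure V (Subgroup.normalizer (Q : Set G)) ≤ D := by rw [hD]; exact le_sup_left
  have hMN : conjClosure V (Subgroup.normalizer (Q : Set G)) ≤ Subgroup.normalizer (Q : Set G) :=
    my_conjClosure_le fun g hg a ha => mul_mem (mul_mem hg (hVN ha)) (inv_mem hg)
  have hPM : conjClosure V D ≤ conjClosure V (Subgroup.normalizer (Q : Set G)) :=
    my_conjClosure_le fun d hd a ha => my_mem_conjClosure_of (hDN hd) ha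
  have hPD : conjClosure V D ≤ D :=
    my_conjClosure_le fun d hd a ha => mul_mem (mul_mem hd (hVD ha)) (inv_mem hd)
  have hVP : V ≤ conjClosure V D := my_le_conjClosure V D
  have hQconj : ∀ d ∈ D, ∀ q ∈ Q, d⁻¹ * q * d ∈ Q := by
    intro d hd q hq
    have := (Subgroup.mem_normalizer_iff.mp (inv_mem (hDN hd)) q).mp hq
    simpa using this
  have hQconj' : ∀ d ∈ D, ∀ q ∈ Q, d * q * d⁻¹ ∈ Q := fun d hd q hq =>
    (Subgroup.mem_normalizer_iff.mp (hDN hd) q).mp hq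
  -- ### Part (i)
  have part1 : ¬ IsPGroup p (conjClosure V D) := by
    intro hPp
    obtain ⟨T⟩ := (inferInstance : Nonempty (Sylow p ↥(conjClosure V (Subgroup.normalizer (Q : Set G)))))
    set M := conjClosure V (Subgroup.normalizer (Q : Set G)) with hMdef
    have key : ∀ n ∈ Subgroup.normalizer (Q : Set G), ∀ x ∈ conjClosure V D,
        n * x * n⁻¹ ∈ Subgroup.map M.subtype ↑T := by
      intro n hn x hx
      set Pn := (conjClosure V D).map (MulAut.conj n).toMonoidHom with hPndef
      have hmemPn : ∀ y, y ∈ Pn ↔ ∃ a ∈ conjClosure V D, n * a * n⁻¹ = y := by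
        intro y
        rw [hPndef, Subgroup.mem_map]
        simp [MulAut.conj_apply]
      have hPnM : Pn ≤ M := by
        intro y hy
        obtain ⟨a, ha, rfl⟩ := (hmemPn y).mp hy
        exact my_conj_mem_conjClosure hn (hPM ha)
      have hPnp : IsPGroup p Pn := hPp.map _
      have hPn'p : IsPGroup p (Pn.subgroupOf M) :=
        hPnp.of_equiv (Subgroup.subgroupOfEquivOfLe hPnM).symm
      have hPn'n : (Pn.subgroupOf M).Normal := by
        constructor
        intro xt hxt g
        rw [Subgroup.mem_subgroupOf] at hxt ⊢
        obtain ⟨a, ha, hEq⟩ := (hmemPn _).mp hxt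
        have hm' : n⁻¹ * (g : G) * n ∈ M := by
          simpa using my_conj_mem_conjClosure (inv_mem hn) g.2
        have ha' : (n⁻¹ * (g : G) * n) * a * (n⁻¹ * (g : G) * n)⁻¹ ∈ conjClosure V D :=
          my_conj_mem_conjClosure (hMD hm') ha
        refine (hmemPn _).mpr ⟨_, ha', ?_⟩
        push_cast
        rw [← hEq]
        group
      have hle : Pn.subgroupOf M ≤ ↑T := my_normal_le_sylow hPn'p hPn'n T
      have hy : n * x * n⁻¹ ∈ Pn := (hmemPn _).mpr ⟨x, hx, rfl⟩
      have hyM : n * x * n⁻¹ ∈ M := hPnM hy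
      refine ⟨⟨n * x * n⁻¹, hyM⟩, hle (Subgroup.mem_subgroupOf.mpr hy), rfl⟩
    have hNle : conjClosure (conjClosure V D) (Subgroup.normalizer (Q : Set G)) ≤ Subgroup.map M.subtype ↑T :=
      my_conjClosure_le key
    have hNp : IsPGroup p (conjClosure (conjClosure V D) (Subgroup.normalizer (Q : Set G))) :=
      ((T.2.map M.subtype)).to_le hNle
    have hNN : conjClosure (conjClosure V D) (Subgroup.normalizer (Q : Set G)) ≤ Subgroup.normalizer (Q : Set G) :=
      my_conjClosure_le fun g hg a ha =>
        mul_mem (mul_mem hg (hDN (hPD ha))) (inv_mem hg)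
    have hNnorm : ∀ g ∈ Subgroup.normalizer (Q : Set G), ∀ x ∈ conjClosure (conjClosure V D) (Subgroup.normalizer (Q : Set G)),
        g * x * g⁻¹ ∈ conjClosure (conjClosure V D) (Subgroup.normalizer (Q : Set G)) :=
      fun g hg x hx => my_conj_mem_conjClosure hg hx
    have hNQ : conjClosure (conjClosure V D) (Subgroup.normalizer (Q : Set G)) ≤ Q :=
      hQop _ hNp hNN hNnorm
    exact hVQ ((hVP.trans (my_le_conjClosure _ _)).trans hNQ)
  -- ### properties of W
  have hWQ : W ≤ Q := by
    rw [hW]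
    exact my_conjClosure_le fun d hd a ha => hQconj' d hd a ha.2
  have hWnorm : ∀ d ∈ D, ∀ w ∈ W, d * w * d⁻¹ ∈ W := by
    intro d hd w hw
    rw [hW] at hw ⊢
    exact my_conj_mem_conjClosure hd hw
  have hVQW : V ⊓ Q ≤ W := by rw [hW]; exact my_le_conjClosure _ _
  -- ### Part (ii), elementwise
  have key2 : ∀ x ∈ conjClosure V D, ∀ q ∈ Q, q * x * q⁻¹ * x⁻¹ ∈ W := by
    intro x hx
    induction hx using Subgroup.closure_induction with
    | mem y hy =>
      obtain ⟨d, hd, a, ha, rfl⟩ := hy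
      intro q hq
      have hq' : d⁻¹ * q * d ∈ Q := hQconj d hd q hq
      have hVpart : (d⁻¹ * q * d) * a * (d⁻¹ * q * d)⁻¹ * a⁻¹ ∈ V :=
        mul_mem (hVnormL _ (hSL (hQS hq')) a ha) (inv_mem ha)
      have hQpart : (d⁻¹ * q * d) * a * (d⁻¹ * q * d)⁻¹ * a⁻¹ ∈ Q := by
        have h1 : a * (d⁻¹ * q * d)⁻¹ * a⁻¹ ∈ Q :=
          (Subgroup.mem_normalizer_iff.mp (hVN ha) _).mp (inv_mem hq')
        have e : (d⁻¹ * q * d) * a * (d⁻¹ * q * d)⁻¹ * a⁻¹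
            = (d⁻¹ * q * d) * (a * (d⁻¹ * q * d)⁻¹ * a⁻¹) := by group
        rw [e]
        exact mul_mem hq' h1
      have hin : d * ((d⁻¹ * q * d) * a * (d⁻¹ * q * d)⁻¹ * a⁻¹) * d⁻¹ ∈ W :=
        hWnorm d hd _ (hVQW ⟨hVpart, hQpart⟩)
      have e : q * (d * a * d⁻¹) * q⁻¹ * (d * a * d⁻¹)⁻¹
          = d * ((d⁻¹ * q * d) * a * (d⁻¹ * q * d)⁻¹ * a⁻¹) * d⁻¹ := by group
      rw [e]
      exact hin
    | one =>
      intro q hq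
      simpa using one_mem W
    | mul x y hxm hym ihx ihy =>
      intro q hq
      have hxD : x ∈ D := hPD hxm
      have e : q * (x * y) * q⁻¹ * (x * y)⁻¹
          = (q * x * q⁻¹ * x⁻¹) * (x * (q * y * q⁻¹ * y⁻¹) * x⁻¹) := by group
      rw [e]
      exact mul_mem (ihx q hq) (hWnorm x hxD _ (ihy q hq))
    | inv x hxm ihx =>
      intro q hq
      have hxD : x ∈ D := hPD hxm
      have e : q * x⁻¹ * q⁻¹ * x⁻¹⁻¹
          = x⁻¹ * (q * x * q⁻¹ * x⁻¹)⁻¹ * x⁻¹⁻¹ := by group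
      rw [e]
      exact hWnorm x⁻¹ (inv_mem hxD) _ (inv_mem (ihx q hq))
  have part2 : ⁅Q, conjClosure V D⁆ ≤ W := by
    rw [Subgroup.commutator_le]
    intro q hq x hx
    rw [commutatorElement_def]
    exact key2 x hx q hq
  -- ### Part (iii)
  refine ⟨part1, part2, ?_⟩
  intro hWC
  apply part1
  -- the conjugates of V centralize W
  have hPcentW : ∀ x ∈ conjClosure V D, ∀ w ∈ W, w * x = x * w := by
    have hle : conjClosure V D ≤ Subgroup.centralizer (W : Set G) := by
      refine my_conjClosure_le fun d hd a ha => ?_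
      refine Subgroup.mem_centralizer_iff.mpr fun w hw => ?_
      have hw' : d⁻¹ * w * d ∈ W := by
        simpa using hWnorm d⁻¹ (inv_mem hd) w hw
      have hcomm : a * (d⁻¹ * w * d) = (d⁻¹ * w * d) * a :=
        Subgroup.mem_centralizer_iff.mp (hWC hw') a ha
      calc w * (d * a * d⁻¹) = d * ((d⁻¹ * w * d) * a) * d⁻¹ := by group
      _ = d * (a * (d⁻¹ * w * d)) * d⁻¹ := by rw [hcomm]
      _ = (d * a * d⁻¹) * w := by group
    exact fun x hx w hw => Subgroup.mem_centralizer_iff.mp (hle hx) w hw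
  -- uniform exponent on Q
  obtain ⟨m, hm⟩ := hQ.1.exists_card_eq
  have hQpow : ∀ w ∈ Q, w ^ (p ^ m) = 1 := by
    intro w hw
    have : (⟨w, hw⟩ : ↥Q) ^ (p ^ m) = 1 := by
      rw [← hm]
      exact pow_card_eq_one'
    have := congrArg (Subtype.val) this
    simpa using this
  -- every element of ⟨V^D⟩ has p-power order
  intro g
  refine ⟨m + m, ?_⟩
  set x : G := (g : G) with hxdef
  have hx : x ∈ conjClosure V D := g.2
  have hxq : ∀ q ∈ Q, q * x ^ (p ^ m) * q⁻¹ = x ^ (p ^ m) := by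
    intro q hq
    have hcW : q * x * q⁻¹ * x⁻¹ ∈ W := key2 x hx q hq
    have hcx : Commute (q * x * q⁻¹ * x⁻¹) x := hPcentW x hx _ hcW
    have h1 : q * x * q⁻¹ = (q * x * q⁻¹ * x⁻¹) * x := by group
    calc q * x ^ (p ^ m) * q⁻¹ = (q * x * q⁻¹) ^ (p ^ m) := (my_conj_pow q x (p ^ m)).symm
    _ = ((q * x * q⁻¹ * x⁻¹) * x) ^ (p ^ m) := by rw [← h1]
    _ = (q * x * q⁻¹ * x⁻¹) ^ (p ^ m) * x ^ (p ^ m) := hcx.mul_pow _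
    _ = x ^ (p ^ m) := by rw [hQpow _ (hWQ hcW), one_mul]
  have hxQ : x ^ (p ^ m) ∈ Q := by
    apply hQ.2.1
    refine Subgroup.mem_centralizer_iff.mpr fun q hq => ?_
    have := hxq q hq
    calc q * x ^ (p ^ m) = (q * x ^ (p ^ m) * q⁻¹) * q := by group
    _ = x ^ (p ^ m) * q := by rw [this]
  have hfin : x ^ (p ^ (m + m)) = 1 := by
    have : (x ^ (p ^ m)) ^ (p ^ m) = 1 := hQpow _ hxQ
    rw [← pow_mul, ← pow_add] at this
    exact this
  apply Subtype.ext
  push_cast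
  simpa using hfin
end
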